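/- arXiv:1302.6727 — 2 statements merged into one kernel-verified Lean document; each statement's English description precedes it below -/
import Mathlib

section
/- Let $G$ be a graph and suppose events $A$ and $B$ on the product probability space $\{open, closed\}^V$ with i.i.d. Bernoulli($p$) vertices satisfy the disjoint-occurrence relation. Then the probability of the disjoint occurrence $A \square B$ is at most $\mathbb{P}_p(A)\,\mathbb{P}_p(B)$. -/
open MeasureTheory

set_option linter.unusedSectionVars false
set_option linter.unusedVariables false

section BKAux

open scoped Classical

variable {V : Type*} [Fintype V] [DecidableEq V]

/-- `I` forces the event `A` under configuration `α`. -/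
def BKForces (A : Set (V → Bool)) (I : Set V) (α : V → Bool) : Prop :=
  ∀ σ : V → Bool, (∀ v ∈ I, σ v = α v) → σ ∈ A

/-- disjoint occurrence with (possibly different) configurations for `A` and `B`. -/
def BKBox (A B : Set (V → Bool)) (α β : V → Bool) : Prop :=
  ∃ I J : Set V, Disjoint I J ∧ BKForces A I α ∧ BKForces B J β

def BKIncr (A : Set (V → Bool)) : Prop := ∀ ω ∈ A, ∀ ω' : V → Bool, ω ≤ ω' → ω' ∈ A

def bkHyb (K : Finset V) (ω ω' : V → Bool) : V → Bool := fun v => if v ∈ K then ω' v else ω v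

noncomputable def bkWt (w : V → Bool → ENNReal) (ω : V → Bool) : ENNReal := ∏ v, w v (ω v)

noncomputable def bkP (w : V → Bool → ENNReal) (A B : Set (V → Bool)) (K : Finset V) : ENNReal :=
  ∑ ω : V → Bool, ∑ ω' : V → Bool,
    if BKBox A B ω (bkHyb K ω ω') then bkWt w ω * bkWt w ω' else 0

lemma bkForces_congr {A : Set (V → Bool)} {I : Set V} {α α' : V → Bool}
    (hagree : ∀ v ∈ I, α' v = α v) (h : BKForces A I α) : BKForces A I α' :=
  fun σ hσ => h σ fun v hv => (hσ v hv).trans (hagree v hv)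

lemma bkForces_mono {A : Set (V → Bool)} (hA : BKIncr A) {I : Set V} {α α' : V → Bool}
    (hle : α ≤ α') (h : BKForces A I α) : BKForces A I α' := by
  intro σ hσ
  set σ' : V → Bool := fun u => if u ∈ I then α u else σ u with hσ'
  have h1 : σ' ∈ A := h σ' fun v hv => if_pos hv
  refine hA σ' h1 σ ?_
  intro u
  by_cases hu : u ∈ I
  · have : σ' u = α u := if_pos hu
    rw [this, hσ u hu]
    exact hle u
  · simp [hσ', hu]

lemma bkBox_mono {A B : Set (V → Bool)} (hA : BKIncr A) (hB : BKIncr B)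
    {α α' β β' : V → Bool} (h1 : α ≤ α') (h2 : β ≤ β') (h : BKBox A B α β) :
    BKBox A B α' β' := by
  obtain ⟨I, J, hd, hI, hJ⟩ := h
  exact ⟨I, J, hd, bkForces_mono hA h1 hI, bkForces_mono hB h2 hJ⟩

lemma bkBox_split {A B : Set (V → Bool)} {α β : V → Bool} {v : V}
    (h : BKBox A B (Function.update α v true) (Function.update β v true)) :
    BKBox A B (Function.update α v true) β ∨ BKBox A B α (Function.update β v true) := by
  obtain ⟨I, J, hd, hI, hJ⟩ := h
  by_cases hvJ : v ∈ J
  · have hvI : v ∉ I := fun hvI => Set.disjoint_left.mp hd hvI hvJ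
    refine Or.inr ⟨I, J, hd, bkForces_congr ?_ hI, hJ⟩
    intro u hu
    have : u ≠ v := fun h => hvI (h ▸ hu)
    simp [Function.update_of_ne this]
  · refine Or.inl ⟨I, J, hd, hI, bkForces_congr ?_ hJ⟩
    intro u hu
    have : u ≠ v := fun h => hvJ (h ▸ hu)
    simp [Function.update_of_ne this]

lemma bk_sum_split (v : V) (g : (V → Bool) → ENNReal) :
    ∑ ω : V → Bool, g ω =
      ∑ ω : V → Bool, if ω v = false then g ω + g (Function.update ω v true) else 0 := by
  rw [← Finset.sum_filter_add_sum_filter_not Finset.univ (fun ω => ω v = false) g,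
    ← Finset.sum_filter, Finset.sum_add_distrib]
  congr 1
  refine Finset.sum_nbij' (fun ω => Function.update ω v false) (fun ω => Function.update ω v true)
    ?_ ?_ ?_ ?_ ?_
  · intro a ha; simp
  · intro a ha; simp
  · intro a ha
    simp only [Finset.mem_filter, Finset.mem_univ, true_and] at ha
    have hav : a v = true := by simpa using ha
    funext u
    by_cases hu : u = v
    · subst hu; simp [hav]
    · simp [Function.update_of_ne hu]
  · intro a ha
    simp only [Finset.mem_filter, Finset.mem_univ, true_and] at ha
    funext u
    by_cases hu : u = v
    · subst hu; simp [ha]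
    · simp [Function.update_of_ne hu]
  · intro a ha
    simp only [Finset.mem_filter, Finset.mem_univ, true_and] at ha
    have hav : a v = true := by simpa using ha
    congr 1
    funext u
    by_cases hu : u = v
    · subst hu; simp [hav]
    · simp [Function.update_of_ne hu]

lemma bkHyb_insert (K : Finset V) (v : V) (ω ω' : V → Bool) :
    bkHyb (insert v K) ω ω' = Function.update (bkHyb K ω ω') v (ω' v) := by
  funext u
  by_cases hu : u = v
  · subst hu; simp [bkHyb]
  · simp [bkHyb, Function.update_of_ne hu, hu]

lemma bkHyb_update_left {K : Finset V} {v : V} (hv : v ∉ K) (ω ω' : V → Bool) (s : Bool) :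
    bkHyb K (Function.update ω v s) ω' = Function.update (bkHyb K ω ω') v s := by
  funext u
  by_cases hu : u = v
  · subst hu; simp [bkHyb, hv]
  · simp [bkHyb, Function.update_of_ne hu]

lemma bkHyb_update_right {K : Finset V} {v : V} (hv : v ∉ K) (ω ω' : V → Bool) (t : Bool) :
    bkHyb K ω (Function.update ω' v t) = bkHyb K ω ω' := by
  funext u
  by_cases hu : u = v
  · subst hu; simp [bkHyb, hv]
  · simp [bkHyb, Function.update_of_ne hu]

lemma bkWt_update (w : V → Bool → ENNReal) (ω : V → Bool) (v : V) (s : Bool) :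
    bkWt w (Function.update ω v s) = w v s * ∏ u ∈ Finset.univ.erase v, w u (ω u) := by
  rw [bkWt, ← Finset.mul_prod_erase Finset.univ _ (Finset.mem_univ v)]
  congr 1
  · simp
  · refine Finset.prod_congr rfl fun u hu => ?_
    rw [Function.update_of_ne (Finset.ne_of_mem_erase hu)]

lemma bk_four_term (a b r r' : ENNReal) (d00 d01 d10 d11 : Prop)
    (h0 : d00 → d01 ∧ d10 ∧ d11) (h1 : d11 → d10 ∨ d01) :
    ((if d00 then b * r * (b * r') else 0) + (if d11 then a * r * (b * r') else 0)) +
      ((if d00 then b * r * (a * r') else 0) + (if d11 then a * r * (a * r') else 0)) ≤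
    ((if d00 then b * r * (b * r') else 0) + (if d10 then a * r * (b * r') else 0)) +
      ((if d01 then b * r * (a * r') else 0) + (if d11 then a * r * (a * r') else 0)) := by
  by_cases h00 : d00
  · obtain ⟨h01, h10, h11⟩ := h0 h00
    simp [h00, h01, h10, h11]
  · by_cases h11 : d11
    · rcases h1 h11 with h10 | h01
      · simp only [h00, if_false, h11, if_true, h10, zero_add, add_zero]
        calc a * r * (b * r') + a * r * (a * r')
            ≤ a * r * (b * r') + (0 + a * r * (a * r')) := by rw [zero_add]
          _ ≤ a * r * (b * r') + ((if d01 then b * r * (a * r') else 0) + a * r * (a * r')) := by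
              gcongr; exact zero_le
      · simp only [h00, if_false, h11, if_true, zero_add, add_zero, h01]
        calc a * r * (b * r') + a * r * (a * r')
            = 0 + (b * r * (a * r') + a * r * (a * r')) := by ring
          _ ≤ (if d10 then a * r * (b * r') else 0) + (b * r * (a * r') + a * r * (a * r')) := by
              gcongr; exact zero_le
    · simp [h00, h11]

lemma bk_le_update_true (f : V → Bool) (v : V) : f ≤ Function.update f v true := by
  intro u
  by_cases hu : u = v
  · subst hu; rw [Function.update_self]; exact Bool.le_true _
  · rw [Function.update_of_ne hu]

lemma bkP_step (w : V → Bool → ENNReal) {A B : Set (V → Bool)} (hA : BKIncr A) (hB : BKIncr B)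
    {K : Finset V} {v : V} (hv : v ∉ K) : bkP w A B K ≤ bkP w A B (insert v K) := by
  unfold bkP
  rw [bk_sum_split v (fun ω => ∑ ω' : V → Bool,
      if BKBox A B ω (bkHyb K ω ω') then bkWt w ω * bkWt w ω' else 0),
    bk_sum_split v (fun ω => ∑ ω' : V → Bool,
      if BKBox A B ω (bkHyb (insert v K) ω ω') then bkWt w ω * bkWt w ω' else 0)]
  refine Finset.sum_le_sum fun ω _ => ?_
  by_cases hω : ω v = false
  swap
  · rw [if_neg hω, if_neg hω]
  rw [if_pos hω, if_pos hω, ← Finset.sum_add_distrib, ← Finset.sum_add_distrib]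
  rw [bk_sum_split v (fun ω' =>
      (if BKBox A B ω (bkHyb K ω ω') then bkWt w ω * bkWt w ω' else 0) +
      (if BKBox A B (Function.update ω v true) (bkHyb K (Function.update ω v true) ω')
        then bkWt w (Function.update ω v true) * bkWt w ω' else 0)),
    bk_sum_split v (fun ω' =>
      (if BKBox A B ω (bkHyb (insert v K) ω ω') then bkWt w ω * bkWt w ω' else 0) +
      (if BKBox A B (Function.update ω v true) (bkHyb (insert v K) (Function.update ω v true) ω')
        then bkWt w (Function.update ω v true) * bkWt w ω' else 0))]
  refine Finset.sum_le_sum fun ω' _ => ?_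
  by_cases hω' : ω' v = false
  swap
  · rw [if_neg hω', if_neg hω']
  rw [if_pos hω', if_pos hω']
  -- notation
  set β := bkHyb K ω ω' with hβ
  have hβv : β v = false := by simp [hβ, bkHyb, hv, hω]
  have hωup : Function.update ω v false = ω := by rw [← hω, Function.update_eq_self]
  have hω'up : Function.update ω' v false = ω' := by rw [← hω', Function.update_eq_self]
  have hβup : Function.update β v false = β := by rw [← hβv, Function.update_eq_self]
  have e2 : bkHyb K (Function.update ω v true) ω' = Function.update β v true :=
    bkHyb_update_left hv ω ω' true
  have e3 : bkHyb K ω (Function.update ω' v true) = β := bkHyb_update_right hv ω ω' true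
  have e4 : bkHyb K (Function.update ω v true) (Function.update ω' v true) =
      Function.update β v true := by
    rw [bkHyb_update_right hv, bkHyb_update_left hv]
  have e5 : bkHyb (insert v K) ω ω' = β := by
    rw [bkHyb_insert, hω', hβup]
  have e6 : bkHyb (insert v K) (Function.update ω v true) ω' = β := by
    rw [bkHyb_insert, bkHyb_update_left hv, hω', Function.update_idem, hβup]
  have e7 : bkHyb (insert v K) ω (Function.update ω' v true) = Function.update β v true := by
    rw [bkHyb_insert, bkHyb_update_right hv, Function.update_self]
  have e8 : bkHyb (insert v K) (Function.update ω v true) (Function.update ω' v true) =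
      Function.update β v true := by
    rw [bkHyb_insert, bkHyb_update_right hv, bkHyb_update_left hv, Function.update_self,
      Function.update_idem]
  have w1 : bkWt w ω = w v false * ∏ u ∈ Finset.univ.erase v, w u (ω u) := by
    rw [← hωup, bkWt_update]
    congr 1
    refine Finset.prod_congr rfl fun u hu => ?_
    rw [hωup]
  have w2 : bkWt w (Function.update ω v true)
      = w v true * ∏ u ∈ Finset.univ.erase v, w u (ω u) := bkWt_update w ω v true
  have w3 : bkWt w ω' = w v false * ∏ u ∈ Finset.univ.erase v, w u (ω' u) := by
    rw [← hω'up, bkWt_update]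
    congr 1
    refine Finset.prod_congr rfl fun u hu => ?_
    rw [hω'up]
  have w4 : bkWt w (Function.update ω' v true)
      = w v true * ∏ u ∈ Finset.univ.erase v, w u (ω' u) := bkWt_update w ω' v true
  rw [e2, e3, e4, e5, e6, e7, e8, w1, w2, w3, w4]
  refine bk_four_term (w v true) (w v false)
    (∏ u ∈ Finset.univ.erase v, w u (ω u)) (∏ u ∈ Finset.univ.erase v, w u (ω' u))
    (BKBox A B ω β) (BKBox A B ω (Function.update β v true))
    (BKBox A B (Function.update ω v true) β)
    (BKBox A B (Function.update ω v true) (Function.update β v true)) ?_ ?_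
  · intro h
    exact ⟨bkBox_mono hA hB le_rfl (bk_le_update_true β v) h,
      bkBox_mono hA hB (bk_le_update_true ω v) le_rfl h,
      bkBox_mono hA hB (bk_le_update_true ω v) (bk_le_update_true β v) h⟩
  · exact bkBox_split

lemma bkP_empty (w : V → Bool → ENNReal) (A B : Set (V → Bool)) :
    bkP w A B ∅ =
      (∑ ω : V → Bool, if BKBox A B ω ω then bkWt w ω else 0) * ∑ ω : V → Bool, bkWt w ω := by
  rw [bkP, Finset.sum_mul]
  refine Finset.sum_congr rfl fun ω _ => ?_
  have h : bkHyb (∅ : Finset V) ω = fun ω' => ω := by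
    funext ω' u; simp [bkHyb]
  rw [h]
  by_cases hb : BKBox A B ω ω
  · simp only [hb, if_true, Finset.mul_sum]
  · simp [hb]

lemma bkP_univ_le (w : V → Bool → ENNReal) (A B : Set (V → Bool)) :
    bkP w A B Finset.univ ≤
      (∑ ω : V → Bool, if ω ∈ A then bkWt w ω else 0) *
        ∑ ω : V → Bool, if ω ∈ B then bkWt w ω else 0 := by
  rw [bkP, Finset.sum_mul_sum]
  refine Finset.sum_le_sum fun ω _ => Finset.sum_le_sum fun ω' _ => ?_
  have h : bkHyb (Finset.univ : Finset V) ω ω' = ω' := by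
    funext u; simp [bkHyb]
  rw [h]
  by_cases hb : BKBox A B ω ω'
  · obtain ⟨I, J, _, hI, hJ⟩ := hb
    have hAm : ω ∈ A := hI ω fun u _ => rfl
    have hBm : ω' ∈ B := hJ ω' fun u _ => rfl
    rw [if_pos ⟨I, J, ‹_›, hI, hJ⟩, if_pos hAm, if_pos hBm]
  · rw [if_neg hb]
    exact zero_le

theorem bk_sum (w : V → Bool → ENNReal) (A B : Set (V → Bool))
    (hA : BKIncr A) (hB : BKIncr B) :
    (∑ ω : V → Bool, if BKBox A B ω ω then bkWt w ω else 0) * (∑ ω : V → Bool, bkWt w ω) ≤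
      (∑ ω : V → Bool, if ω ∈ A then bkWt w ω else 0) *
        ∑ ω : V → Bool, if ω ∈ B then bkWt w ω else 0 := by
  rw [← bkP_empty]
  have key : ∀ s : Finset V, bkP w A B ∅ ≤ bkP w A B s := by
    intro s
    induction s using Finset.induction_on with
    | empty => exact le_rfl
    | @insert v s hvs ih => exact ih.trans (bkP_step w hA hB hvs)
  exact (key Finset.univ).trans (bkP_univ_le w A B)

lemma bk_measure_eq_sum (p : NNReal) (hp : p ≤ 1) (S : Set (V → Bool)) :
    (Measure.pi fun _ : V => (PMF.bernoulli p hp).toMeasure) S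
      = ∑ ω : V → Bool, if ω ∈ S then bkWt (fun _ b => (PMF.bernoulli p hp) b) ω else 0 := by
  have hsing : ∀ ω : V → Bool,
      (Measure.pi fun _ : V => (PMF.bernoulli p hp).toMeasure) {ω}
        = bkWt (fun _ b => (PMF.bernoulli p hp) b) ω := by
    intro ω
    rw [← Set.univ_pi_singleton, Measure.pi_pi]
    refine Finset.prod_congr rfl fun v _ => ?_
    exact PMF.toMeasure_apply_singleton _ _ (measurableSet_singleton _)
  have hS : S = ⋃ ω ∈ S.toFinite.toFinset, ({ω} : Set (V → Bool)) := by
    ext x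
    simp only [Set.mem_iUnion, Set.Finite.mem_toFinset, Set.mem_singleton_iff, exists_prop]
    exact ⟨fun h => ⟨x, h, rfl⟩, fun ⟨i, hi, he⟩ => he ▸ hi⟩
  conv_lhs => rw [hS]
  rw [measure_biUnion_finset ?hd ?hm]
  case hd =>
    intro x _ y _ hxy
    simp only [Function.onFun]
    exact Set.disjoint_singleton.mpr hxy
  case hm =>
    intro b _
    exact measurableSet_singleton b
  rw [Finset.sum_congr rfl fun ω _ => hsing ω]
  rw [← Finset.sum_filter]
  refine Finset.sum_congr ?_ fun ω _ => rfl
  ext ω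
  simp only [Finset.mem_filter, Finset.mem_univ, true_and, Set.Finite.mem_toFinset]

end BKAux

open scoped Classical in
/-- The van den Berg–Kesten (BK) inequality for increasing events in Bernoulli site
percolation: the probability of the disjoint occurrence `A □ B` is at most
`P_p(A) * P_p(B)`. Configurations are elements of `{open, closed}^V ≃ V → Bool`
(`true` = open), and the measure is the product of Bernoulli(p) measures. -/
theorem bk_inequality {V : Type*} [Fintype V] (p : ENNReal) (hp : p ≤ 1)
    (A B : Set (V → Bool))
    (hAinc : ∀ ω ∈ A, ∀ ω' : V → Bool, ω ≤ ω' → ω' ∈ A)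
    (hBinc : ∀ ω ∈ B, ∀ ω' : V → Bool, ω ≤ ω' → ω' ∈ B)
    (hAm : MeasurableSet A) (hBm : MeasurableSet B)
    (hboxm : MeasurableSet {ω : V → Bool | ∃ I J : Set V, Disjoint I J ∧
        (∀ ω' : V → Bool, (∀ v ∈ I, ω' v = ω v) → ω' ∈ A) ∧
        (∀ ω' : V → Bool, (∀ v ∈ J, ω' v = ω v) → ω' ∈ B)}) :
    (Measure.pi fun _ : V => (PMF.bernoulli p.toNNReal (by simpa using ENNReal.toNNReal_mono ENNReal.one_ne_top hp)).toMeasure)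
        {ω : V → Bool | ∃ I J : Set V, Disjoint I J ∧
          (∀ ω' : V → Bool, (∀ v ∈ I, ω' v = ω v) → ω' ∈ A) ∧
          (∀ ω' : V → Bool, (∀ v ∈ J, ω' v = ω v) → ω' ∈ B)} ≤
      (Measure.pi fun _ : V => (PMF.bernoulli p.toNNReal (by simpa using ENNReal.toNNReal_mono ENNReal.one_ne_top hp)).toMeasure) A *
        (Measure.pi fun _ : V => (PMF.bernoulli p.toNNReal (by simpa using ENNReal.toNNReal_mono ENNReal.one_ne_top hp)).toMeasure) B := by

  classical
  have hp' : p.toNNReal ≤ 1 := by simpa using ENNReal.toNNReal_mono ENNReal.one_ne_top hp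
  set w : V → Bool → ENNReal := fun _ b => (PMF.bernoulli p.toNNReal hp') b with hw
  set μ := Measure.pi fun _ : V => (PMF.bernoulli p.toNNReal hp').toMeasure with hμ
  have huniv : (∑ ω : V → Bool, bkWt w ω) = 1 := by
    have h1 : μ Set.univ = 1 := by
      rw [hμ, ← Set.pi_univ Set.univ, Measure.pi_pi]
      simp only [measure_univ, Finset.prod_const_one]
    rw [← h1, bk_measure_eq_sum p.toNNReal hp' Set.univ]
    simp [hw]
  have hbox : {ω : V → Bool | ∃ I J : Set V, Disjoint I J ∧
      (∀ ω' : V → Bool, (∀ v ∈ I, ω' v = ω v) → ω' ∈ A) ∧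
      (∀ ω' : V → Bool, (∀ v ∈ J, ω' v = ω v) → ω' ∈ B)} = {ω | BKBox A B ω ω} := rfl
  calc μ {ω : V → Bool | ∃ I J : Set V, Disjoint I J ∧
          (∀ ω' : V → Bool, (∀ v ∈ I, ω' v = ω v) → ω' ∈ A) ∧
          (∀ ω' : V → Bool, (∀ v ∈ J, ω' v = ω v) → ω' ∈ B)}
      = ∑ ω : V → Bool, if BKBox A B ω ω then bkWt w ω else 0 := by
        rw [hμ, bk_measure_eq_sum p.toNNReal hp']
        rfl
    _ = (∑ ω : V → Bool, if BKBox A B ω ω then bkWt w ω else 0) *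
          ∑ ω : V → Bool, bkWt w ω := by rw [huniv, mul_one]
    _ ≤ (∑ ω : V → Bool, if ω ∈ A then bkWt w ω else 0) *
          ∑ ω : V → Bool, if ω ∈ B then bkWt w ω else 0 :=
        bk_sum w A B hAinc hBinc
    _ = μ A * μ B := by rw [hμ, bk_measure_eq_sum p.toNNReal hp' A, bk_measure_eq_sum p.toNNReal hp' B]
end

section
/- Let $u, v, w$ be vertices of the triangular lattice with $v \prec u$, $v \prec u'$ along a shortest path, and $u \sim u'$. Let $\sigma(v,u)$ denote the triangular-grid approximation of the straight line segment from $v$ to $u$ (the sequence of hexagon centers whose hexagons the segment crosses). Then for every vertex $w \in \sigma(v,u)$ there is a vertex $w' \in \sigma(v,u')$ with $w \sim w'$ or $w = w'$. -/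
noncomputable section

/-- Vertices of the triangular lattice, in coordinates w.r.t. the basis
`e₁ = (1,0)`, `e₂ = (cos(π/3), sin(π/3))`. -/
abbrev Vtx := ℤ × ℤ

/-- The planar embedding `a e₁ + b e₂`. -/
def emb (v : Vtx) : ℝ × ℝ :=
  ((v.1 : ℝ) + (v.2 : ℝ) / 2, (v.2 : ℝ) * (Real.sqrt 3 / 2))

/-- Squared Euclidean distance in the plane. -/
def sqDist (x y : ℝ × ℝ) : ℝ := (x.1 - y.1) ^ 2 + (x.2 - y.2) ^ 2

/-- Adjacency in the triangular lattice: Euclidean distance `1`. -/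
def AdjE (u v : Vtx) : Prop := sqDist (emb u) (emb v) = 1

/-- The (closed) regular hexagon of side `1/√3` centred at the lattice vertex `v`
with a vertical side: it is the Voronoi cell of `v` in the triangular lattice. -/
def Hex (v : Vtx) : Set (ℝ × ℝ) :=
  {x | ∀ w : Vtx, sqDist x (emb v) ≤ sqDist x (emb w)}

namespace GS

lemma hs3 : Real.sqrt 3 * Real.sqrt 3 = 3 := Real.mul_self_sqrt (by norm_num)
lemma hs0 : (0:ℝ) ≤ Real.sqrt 3 := Real.sqrt_nonneg 3

lemma int_le_sq (n : ℤ) : n ≤ n ^ 2 := by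
  rcases le_or_gt n 0 with h | h
  · nlinarith [sq_nonneg n]
  · nlinarith

lemma int_neg_le_sq (n : ℤ) : -n ≤ n ^ 2 := by nlinarith [sq_nonneg n]

lemma emb_sub (p q : Vtx) : emb (p - q) = emb p - emb q := by
  simp only [emb, Prod.fst_sub, Prod.snd_sub, Prod.mk_sub_mk, Prod.mk.injEq]
  push_cast
  constructor <;> ring

lemma emb_add (p q : Vtx) : emb (p + q) = emb p + emb q := by
  simp only [emb, Prod.fst_add, Prod.snd_add, Prod.mk_add_mk, Prod.mk.injEq]
  push_cast
  constructor <;> ring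

lemma sqDist_sub (x y c : ℝ × ℝ) : sqDist (x - c) (y - c) = sqDist x y := by
  simp only [sqDist, Prod.fst_sub, Prod.snd_sub]; ring

lemma hex_sub (x : ℝ × ℝ) (c w : Vtx) : x ∈ Hex w ↔ x - emb c ∈ Hex (w - c) := by
  constructor
  · intro h z
    have h2 := h (z + c)
    have e1 : emb z = emb (z + c) - emb c := by
      rw [show z = z + c - c by ring] ; rw [emb_sub]; ring_nf
    rw [show emb (w - c) = emb w - emb c from emb_sub w c, e1, sqDist_sub, sqDist_sub]
    exact h2
  · intro h z
    have h2 := h (z - c)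
    rw [emb_sub w c, emb_sub z c, sqDist_sub, sqDist_sub] at h2
    exact h2

lemma expand (x : ℝ × ℝ) (a b : ℤ) :
    sqDist x (emb (a, b)) - sqDist x (emb (0, 0)) =
      ((a:ℝ)^2 + a*b + b^2) - ((a:ℝ) * (2*x.1) + (b:ℝ) * (x.1 + Real.sqrt 3 * x.2)) := by
  simp only [sqDist, emb]
  push_cast
  ring_nf
  linear_combination ((b:ℝ)^2/4) * hs3

lemma key_ineq (a b : ℤ) (p q : ℝ) (hp1 : p ≤ 1) (hp2 : -1 ≤ p)
    (hq1 : q ≤ 1) (hq2 : -1 ≤ q) (hr1 : p - q ≤ 1) (hr2 : -1 ≤ p - q) :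
    (a:ℝ) * p + (b:ℝ) * q ≤ (a:ℝ)^2 + a*b + b^2 := by
  have fa : (a:ℝ) ≤ (a:ℝ)^2 := by exact_mod_cast int_le_sq a
  have fa' : -(a:ℝ) ≤ (a:ℝ)^2 := by exact_mod_cast int_neg_le_sq a
  have fb : (b:ℝ) ≤ (b:ℝ)^2 := by exact_mod_cast int_le_sq b
  have fb' : -(b:ℝ) ≤ (b:ℝ)^2 := by exact_mod_cast int_neg_le_sq b
  have fab : (a:ℝ) + b ≤ ((a:ℝ) + b)^2 := by exact_mod_cast int_le_sq (a + b)
  have fab' : -((a:ℝ) + b) ≤ ((a:ℝ) + b)^2 := by exact_mod_cast int_neg_le_sq (a + b)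
  set A := (a:ℝ); set B := (b:ℝ)
  rcases le_or_gt 0 A with hA | hA <;> rcases le_or_gt 0 B with hB | hB <;>
    rcases le_or_gt 0 (A + B) with hAB | hAB
  · nlinarith [mul_nonneg hA (by linarith : (0:ℝ) ≤ 1 - p),
      mul_nonneg hB (by linarith : (0:ℝ) ≤ 1 - q), mul_nonneg hA hB]
  · linarith
  · nlinarith [mul_nonneg hAB (by linarith : (0:ℝ) ≤ 1 - p),
      mul_nonneg (by linarith : (0:ℝ) ≤ -B) (by linarith : (0:ℝ) ≤ 1 - (p - q)),
      mul_nonneg hAB (by linarith : (0:ℝ) ≤ -B)]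
  · nlinarith [mul_nonneg hA (by linarith : (0:ℝ) ≤ 1 - (p - q)),
      mul_nonneg (by linarith : (0:ℝ) ≤ -(A+B)) (by linarith : (0:ℝ) ≤ 1 + q),
      mul_nonneg hA (by linarith : (0:ℝ) ≤ -(A+B))]
  · nlinarith [mul_nonneg hAB (by linarith : (0:ℝ) ≤ 1 - q),
      mul_nonneg (by linarith : (0:ℝ) ≤ -A) (by linarith : (0:ℝ) ≤ 1 + (p - q)),
      mul_nonneg hAB (by linarith : (0:ℝ) ≤ -A)]
  · nlinarith [mul_nonneg hB (by linarith : (0:ℝ) ≤ 1 + (p - q)),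
      mul_nonneg (by linarith : (0:ℝ) ≤ -(A+B)) (by linarith : (0:ℝ) ≤ 1 + p),
      mul_nonneg hB (by linarith : (0:ℝ) ≤ -(A+B))]
  · linarith
  · nlinarith [mul_nonneg (by linarith : (0:ℝ) ≤ -A) (by linarith : (0:ℝ) ≤ 1 + p),
      mul_nonneg (by linarith : (0:ℝ) ≤ -B) (by linarith : (0:ℝ) ≤ 1 + q),
      mul_nonneg (by linarith : (0:ℝ) ≤ -A) (by linarith : (0:ℝ) ≤ -B)]

lemma mem_hex_zero {y : ℝ × ℝ}
    (h1 : 2 * y.1 ≤ 1) (h2 : -1 ≤ 2 * y.1)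
    (h3 : y.1 + Real.sqrt 3 * y.2 ≤ 1) (h4 : -1 ≤ y.1 + Real.sqrt 3 * y.2)
    (h5 : y.1 - Real.sqrt 3 * y.2 ≤ 1) (h6 : -1 ≤ y.1 - Real.sqrt 3 * y.2) :
    y ∈ Hex ((0:ℤ), (0:ℤ)) := by
  intro z
  obtain ⟨a, b⟩ := z
  have e := expand y a b
  have k := key_ineq a b (2 * y.1) (y.1 + Real.sqrt 3 * y.2) h1 h2 h3 h4
    (by linarith) (by linarith)
  linarith

/-- Extracting the six halfplane constraints from hexagon membership. -/
lemma hex_constraint {x : ℝ × ℝ} (hx : x ∈ Hex ((0:ℤ), (0:ℤ))) (a b : ℤ) :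
    (a:ℝ) * (2*x.1) + (b:ℝ) * (x.1 + Real.sqrt 3 * x.2) ≤ (a:ℝ)^2 + a*b + b^2 := by
  have h := hx (a, b)
  have e := expand x a b
  linarith

end GS

namespace GS

/-- Rotation by 60° on lattice coordinates. -/
def rot (p : Vtx) : Vtx := (-p.2, p.1 + p.2)

def rotInv (p : Vtx) : Vtx := (p.1 + p.2, -p.1)

/-- Rotation by 60° on the plane. -/
def Rot (q : ℝ × ℝ) : ℝ × ℝ :=
  (q.1 / 2 - q.2 * (Real.sqrt 3 / 2), q.1 * (Real.sqrt 3 / 2) + q.2 / 2)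

def RotInv (q : ℝ × ℝ) : ℝ × ℝ :=
  (q.1 / 2 + q.2 * (Real.sqrt 3 / 2), -(q.1 * (Real.sqrt 3 / 2)) + q.2 / 2)

lemma rot_rotInv (p : Vtx) : rot (rotInv p) = p := by
  simp [rot, rotInv]

lemma rotInv_rot (p : Vtx) : rotInv (rot p) = p := by
  simp [rot, rotInv]

lemma Rot_RotInv (q : ℝ × ℝ) : Rot (RotInv q) = q := by
  have h1 : (Rot (RotInv q)).1 = q.1 := by
    simp only [Rot, RotInv]
    linear_combination (q.1/4) * hs3
  have h2 : (Rot (RotInv q)).2 = q.2 := by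
    simp only [Rot, RotInv]
    linear_combination (q.2/4) * hs3
  exact Prod.ext_iff.mpr ⟨h1, h2⟩

lemma emb_rot (p : Vtx) : emb (rot p) = Rot (emb p) := by
  simp only [emb, rot, Rot, Prod.mk.injEq]
  push_cast
  constructor
  · linear_combination ((p.2 : ℝ)/4) * hs3
  · ring

lemma emb_rotInv (p : Vtx) : emb (rotInv p) = RotInv (emb p) := by
  simp only [emb, rotInv, RotInv, Prod.mk.injEq]
  push_cast
  constructor
  · linear_combination (-(p.2 : ℝ)/4) * hs3
  · ring

lemma sqDist_Rot (x y : ℝ × ℝ) : sqDist (Rot x) (Rot y) = sqDist x y := by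
  simp only [sqDist, Rot]
  linear_combination (((x.1 - y.1)^2 + (x.2 - y.2)^2)/4) * hs3

lemma sqDist_RotInv (x y : ℝ × ℝ) : sqDist (RotInv x) (RotInv y) = sqDist x y := by
  simp only [sqDist, RotInv]
  linear_combination (((x.1 - y.1)^2 + (x.2 - y.2)^2)/4) * hs3

lemma hex_rot {x : ℝ × ℝ} {w : Vtx} (h : x ∈ Hex w) : Rot x ∈ Hex (rot w) := by
  intro z
  rw [← rot_rotInv z, emb_rot, emb_rot, sqDist_Rot, sqDist_Rot]
  exact h (rotInv z)

lemma hex_rotInv {x : ℝ × ℝ} {w : Vtx} (h : x ∈ Hex w) : RotInv x ∈ Hex (rotInv w) := by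
  intro z
  rw [← rotInv_rot z, emb_rotInv, emb_rotInv, sqDist_RotInv, sqDist_RotInv]
  exact h (rot z)

lemma Rot_add (a b : ℝ × ℝ) : Rot (a + b) = Rot a + Rot b := by
  simp only [Rot, Prod.fst_add, Prod.snd_add, Prod.mk_add_mk, Prod.mk.injEq]
  constructor <;> ring

lemma Rot_smul (t : ℝ) (a : ℝ × ℝ) : Rot (t • a) = t • Rot a := by
  simp only [Rot, Prod.smul_fst, Prod.smul_snd, smul_eq_mul, Prod.smul_mk, Prod.mk.injEq]
  constructor <;> ring

lemma adjE_rot {u v : Vtx} (h : AdjE u v) : AdjE (rot u) (rot v) := by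
  unfold AdjE at *
  rw [emb_rot, emb_rot, sqDist_Rot]
  exact h

/-- The statement to be conjugated: stability of hexagon membership under a
shift by `t • emb δ`. -/
def SS (δ : Vtx) : Prop :=
  ∀ x : ℝ × ℝ, x ∈ Hex ((0:ℤ), (0:ℤ)) → ∀ t : ℝ, 0 ≤ t → t ≤ 1 →
    ∃ c : Vtx, x + t • emb δ ∈ Hex c ∧ (c = ((0:ℤ), (0:ℤ)) ∨ AdjE ((0:ℤ), (0:ℤ)) c)

lemma SS_rot {δ : Vtx} (h : SS δ) : SS (rot δ) := by
  intro x hx t ht0 ht1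
  have h0 : rotInv ((0:ℤ), (0:ℤ)) = ((0:ℤ), (0:ℤ)) := by simp [rotInv]
  have hx' : RotInv x ∈ Hex ((0:ℤ), (0:ℤ)) := by
    have := hex_rotInv hx
    rwa [h0] at this
  obtain ⟨c, hc, hgood⟩ := h (RotInv x) hx' t ht0 ht1
  refine ⟨rot c, ?_, ?_⟩
  · have h2 := hex_rot hc
    rwa [Rot_add, Rot_smul, Rot_RotInv, ← emb_rot] at h2
  · rcases hgood with h3 | h3
    · subst h3
      left
      simp [rot]
    · right
      have := adjE_rot h3
      have h4 : rot ((0:ℤ), (0:ℤ)) = ((0:ℤ), (0:ℤ)) := by simp [rot]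
      rwa [h4] at this

end GS

namespace GS

lemma adj_0_10 : AdjE ((0:ℤ), (0:ℤ)) ((1:ℤ), (0:ℤ)) := by
  unfold AdjE sqDist emb; push_cast; norm_num

lemma adj_0_01 : AdjE ((0:ℤ), (0:ℤ)) ((0:ℤ), (1:ℤ)) := by
  unfold AdjE sqDist emb; push_cast
  linear_combination (1/4 : ℝ) * hs3

lemma adj_0_1m1 : AdjE ((0:ℤ), (0:ℤ)) ((1:ℤ), (-1:ℤ)) := by
  unfold AdjE sqDist emb; push_cast
  linear_combination (1/4 : ℝ) * hs3

lemma core_e1 : SS ((1:ℤ), (0:ℤ)) := by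
  intro x hx t ht0 ht1
  have c1 : 2 * x.1 ≤ 1 := by have h := hex_constraint hx 1 0; push_cast at h; linarith
  have c2 : -(2 * x.1) ≤ 1 := by have h := hex_constraint hx (-1) 0; push_cast at h; linarith
  have c3 : x.1 + Real.sqrt 3 * x.2 ≤ 1 := by
    have h := hex_constraint hx 0 1; push_cast at h; linarith
  have c4 : -(x.1 + Real.sqrt 3 * x.2) ≤ 1 := by
    have h := hex_constraint hx 0 (-1); push_cast at h; linarith
  have c5 : x.1 - Real.sqrt 3 * x.2 ≤ 1 := by
    have h := hex_constraint hx 1 (-1); push_cast at h; linarith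
  have c6 : -(x.1 - Real.sqrt 3 * x.2) ≤ 1 := by
    have h := hex_constraint hx (-1) 1; push_cast at h; linarith
  have hy : x + t • emb ((1:ℤ), (0:ℤ)) = (x.1 + t, x.2) := by
    have h1 : emb ((1:ℤ), (0:ℤ)) = ((1:ℝ), (0:ℝ)) := by
      simp [emb]
    rw [h1]
    have : t • ((1:ℝ), (0:ℝ)) = ((t:ℝ), (0:ℝ)) := by
      simp [Prod.smul_mk]
    rw [this]
    exact Prod.ext_iff.mpr ⟨by simp, by simp⟩
  rw [hy]
  rcases le_or_gt 0 x.2 with hx2 | hx2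
  · -- upper half : m = √3 x.2 ≥ 0
    have hm0 : 0 ≤ Real.sqrt 3 * x.2 := mul_nonneg hs0 hx2
    by_cases hA : x.1 + t ≤ 1/2
    · by_cases hB : x.1 + t + Real.sqrt 3 * x.2 ≤ 1
      · -- c = (0,0)
        refine ⟨((0:ℤ), (0:ℤ)), ?_, Or.inl rfl⟩
        apply mem_hex_zero <;> dsimp only <;> linarith
      · -- c = (0,1)
        refine ⟨((0:ℤ), (1:ℤ)), ?_, Or.inr adj_0_01⟩
        rw [hex_sub _ ((0:ℤ), (1:ℤ)), sub_self]
        have hpt : ((x.1 + t, x.2) : ℝ × ℝ) - emb ((0:ℤ), (1:ℤ))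
            = (x.1 + t - 1/2, x.2 - Real.sqrt 3 / 2) := by
          simp only [emb, Prod.mk_sub_mk, Prod.mk.injEq]
          push_cast
          constructor <;> ring
        rw [hpt]
        have h0 : ((0:ℤ), (0:ℤ)) = (0 : Vtx) := rfl
        rw [← h0]
        apply mem_hex_zero <;> dsimp only <;> linarith [hs3]
    · by_cases hC : Real.sqrt 3 * x.2 ≤ x.1 + t
      · -- c = (1,0)
        refine ⟨((1:ℤ), (0:ℤ)), ?_, Or.inr adj_0_10⟩
        rw [hex_sub _ ((1:ℤ), (0:ℤ)), sub_self]
        have hpt : ((x.1 + t, x.2) : ℝ × ℝ) - emb ((1:ℤ), (0:ℤ))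
            = (x.1 + t - 1, x.2) := by
          simp only [emb, Prod.mk_sub_mk, Prod.mk.injEq]
          push_cast
          constructor <;> ring
        rw [hpt]
        have h0 : ((0:ℤ), (0:ℤ)) = (0 : Vtx) := rfl
        rw [← h0]
        apply mem_hex_zero <;> dsimp only <;> linarith
      · -- c = (0,1)
        refine ⟨((0:ℤ), (1:ℤ)), ?_, Or.inr adj_0_01⟩
        rw [hex_sub _ ((0:ℤ), (1:ℤ)), sub_self]
        have hpt : ((x.1 + t, x.2) : ℝ × ℝ) - emb ((0:ℤ), (1:ℤ))
            = (x.1 + t - 1/2, x.2 - Real.sqrt 3 / 2) := by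
          simp only [emb, Prod.mk_sub_mk, Prod.mk.injEq]
          push_cast
          constructor <;> ring
        rw [hpt]
        have h0 : ((0:ℤ), (0:ℤ)) = (0 : Vtx) := rfl
        rw [← h0]
        apply mem_hex_zero <;> dsimp only <;> linarith [hs3]
  · -- lower half : m = √3 x.2 ≤ 0
    have hm0 : Real.sqrt 3 * x.2 ≤ 0 := mul_nonpos_of_nonneg_of_nonpos hs0 (le_of_lt hx2)
    by_cases hA : x.1 + t ≤ 1/2
    · by_cases hB : x.1 + t - Real.sqrt 3 * x.2 ≤ 1
      · -- c = (0,0)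
        refine ⟨((0:ℤ), (0:ℤ)), ?_, Or.inl rfl⟩
        apply mem_hex_zero <;> dsimp only <;> linarith
      · -- c = (1,-1)
        refine ⟨((1:ℤ), (-1:ℤ)), ?_, Or.inr adj_0_1m1⟩
        rw [hex_sub _ ((1:ℤ), (-1:ℤ)), sub_self]
        have hpt : ((x.1 + t, x.2) : ℝ × ℝ) - emb ((1:ℤ), (-1:ℤ))
            = (x.1 + t - 1/2, x.2 + Real.sqrt 3 / 2) := by
          simp only [emb, Prod.mk_sub_mk, Prod.mk.injEq]
          push_cast
          constructor <;> ring
        rw [hpt]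
        have h0 : ((0:ℤ), (0:ℤ)) = (0 : Vtx) := rfl
        rw [← h0]
        apply mem_hex_zero <;> dsimp only <;> linarith [hs3]
    · by_cases hC : -(Real.sqrt 3 * x.2) ≤ x.1 + t
      · -- c = (1,0)
        refine ⟨((1:ℤ), (0:ℤ)), ?_, Or.inr adj_0_10⟩
        rw [hex_sub _ ((1:ℤ), (0:ℤ)), sub_self]
        have hpt : ((x.1 + t, x.2) : ℝ × ℝ) - emb ((1:ℤ), (0:ℤ))
            = (x.1 + t - 1, x.2) := by
          simp only [emb, Prod.mk_sub_mk, Prod.mk.injEq]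
          push_cast
          constructor <;> ring
        rw [hpt]
        have h0 : ((0:ℤ), (0:ℤ)) = (0 : Vtx) := rfl
        rw [← h0]
        apply mem_hex_zero <;> dsimp only <;> linarith
      · -- c = (1,-1)
        refine ⟨((1:ℤ), (-1:ℤ)), ?_, Or.inr adj_0_1m1⟩
        rw [hex_sub _ ((1:ℤ), (-1:ℤ)), sub_self]
        have hpt : ((x.1 + t, x.2) : ℝ × ℝ) - emb ((1:ℤ), (-1:ℤ))
            = (x.1 + t - 1/2, x.2 + Real.sqrt 3 / 2) := by
          simp only [emb, Prod.mk_sub_mk, Prod.mk.injEq]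
          push_cast
          constructor <;> ring
        rw [hpt]
        have h0 : ((0:ℤ), (0:ℤ)) = (0 : Vtx) := rfl
        rw [← h0]
        apply mem_hex_zero <;> dsimp only <;> linarith [hs3]

end GS

namespace GS

lemma sqDist_add (x y c : ℝ × ℝ) : sqDist (x + c) (y + c) = sqDist x y := by
  simp only [sqDist, Prod.fst_add, Prod.snd_add]; ring

lemma adjE_add {p q : Vtx} (r : Vtx) (h : AdjE p q) : AdjE (p + r) (q + r) := by
  unfold AdjE at *
  rw [emb_add, emb_add, sqDist_add]
  exact h

lemma ss_all (δ : Vtx) (hδ : δ.1 ^ 2 + δ.1 * δ.2 + δ.2 ^ 2 = 1) : SS δ := by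
  have S1 : SS ((1:ℤ), (0:ℤ)) := core_e1
  have e1 : rot ((1:ℤ), (0:ℤ)) = ((0:ℤ), (1:ℤ)) := by simp [rot]
  have S2 : SS ((0:ℤ), (1:ℤ)) := by rw [← e1]; exact SS_rot S1
  have e2 : rot ((0:ℤ), (1:ℤ)) = ((-1:ℤ), (1:ℤ)) := by simp [rot]
  have S3 : SS ((-1:ℤ), (1:ℤ)) := by rw [← e2]; exact SS_rot S2
  have e3 : rot ((-1:ℤ), (1:ℤ)) = ((-1:ℤ), (0:ℤ)) := by simp [rot]
  have S4 : SS ((-1:ℤ), (0:ℤ)) := by rw [← e3]; exact SS_rot S3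
  have e4 : rot ((-1:ℤ), (0:ℤ)) = ((0:ℤ), (-1:ℤ)) := by simp [rot]
  have S5 : SS ((0:ℤ), (-1:ℤ)) := by rw [← e4]; exact SS_rot S4
  have e5 : rot ((0:ℤ), (-1:ℤ)) = ((1:ℤ), (-1:ℤ)) := by simp [rot]
  have S6 : SS ((1:ℤ), (-1:ℤ)) := by rw [← e5]; exact SS_rot S5
  obtain ⟨a, b⟩ := δ
  simp only at hδ
  have ha1 : -1 ≤ a := by nlinarith [sq_nonneg (a + 2*b), sq_nonneg (a + 1)]
  have ha2 : a ≤ 1 := by nlinarith [sq_nonneg (a + 2*b), sq_nonneg (a - 1)]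
  have hb1 : -1 ≤ b := by nlinarith [sq_nonneg (2*a + b), sq_nonneg (b + 1)]
  have hb2 : b ≤ 1 := by nlinarith [sq_nonneg (2*a + b), sq_nonneg (b - 1)]
  interval_cases a <;> interval_cases b <;> first | exact S1 | exact S2 | exact S3 | exact S4 | exact S5 | exact S6 | omega

end GS

/-- Stability of the grid approximation of segments: if `v ≺ u, u'` along a path
and `u ∼ u'`, then every hexagon met by the segment `s(v,u)` is equal or adjacent
to some hexagon met by the segment `s(v,u')`. Membership of `w` in the grid
approximation `σ(v,u)` is expressed as `Hex w ∩ s(v,u) ≠ ∅`. -/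
theorem grid_approximation_stable
    (n : ℕ) (ρ : ℕ → Vtx)
    (hinj : ∀ i < n, ∀ j < n, ρ i = ρ j → i = j)
    (hadjpath : ∀ i, i + 1 < n → AdjE (ρ i) (ρ (i + 1)))
    (v u u' : Vtx) (iv iu iu' : ℕ)
    (hiv : iv < n) (hiu : iu < n) (hiu' : iu' < n)
    (hv : ρ iv = v) (hu : ρ iu = u) (hu' : ρ iu' = u')
    (hord : iv ≤ iu ∧ iv ≤ iu')
    (hadj : AdjE u u')
    (w : Vtx) (hw : (Hex w ∩ segment ℝ (emb v) (emb u)).Nonempty) :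
    ∃ w' : Vtx, (Hex w' ∩ segment ℝ (emb v) (emb u')).Nonempty ∧
      (w' = w ∨ AdjE w w') := by
  classical
  obtain ⟨x, hxw, hxseg⟩ := hw
  obtain ⟨a, b, ha, hb, hab, hxe⟩ := hxseg
  set δ : Vtx := u' - u with hδdef
  -- the squared length of δ is 1
  have huu' : u + δ = u' := by rw [hδdef]; ring
  have h1 : sqDist (emb u) (emb u') = (δ.1:ℝ)^2 + (δ.1:ℝ)*(δ.2:ℝ) + (δ.2:ℝ)^2 := by
    have e : emb u' = emb u + emb δ := by
      rw [← huu', GS.emb_add]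
    rw [e]
    simp only [sqDist, emb, Prod.fst_add, Prod.snd_add]
    push_cast
    linear_combination ((δ.2:ℝ)^2/4) * GS.hs3
  have hZr : ((δ.1 ^ 2 + δ.1 * δ.2 + δ.2 ^ 2 : ℤ) : ℝ) = 1 := by
    push_cast
    rw [← h1]
    exact hadj
  have hZ : δ.1 ^ 2 + δ.1 * δ.2 + δ.2 ^ 2 = 1 := by exact_mod_cast hZr
  have hSS := GS.ss_all δ hZ
  -- translate x to the central hexagon
  have hx0 : x - emb w ∈ Hex ((0:ℤ), (0:ℤ)) := by
    have := (GS.hex_sub x w w).mp hxw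
    rwa [sub_self w] at this
  have hb1 : b ≤ 1 := by linarith
  obtain ⟨c, hc, hgood⟩ := hSS (x - emb w) hx0 b hb hb1
  refine ⟨c + w, ⟨x + b • emb δ, ?_, ?_⟩, ?_⟩
  · -- hexagon membership
    rw [GS.hex_sub _ w (c + w), add_sub_cancel_right]
    have e : x + b • emb δ - emb w = x - emb w + b • emb δ := by abel
    rwa [e]
  · -- segment membership
    refine ⟨a, b, ha, hb, hab, ?_⟩
    rw [← hxe, hδdef, GS.emb_sub, smul_sub]
    abel
  · -- equality or adjacency
    rcases hgood with h3 | h3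
    · subst h3
      left
      show ((0:ℤ), (0:ℤ)) + w = w
      exact zero_add w
    · right
      have h4 := GS.adjE_add w h3
      rwa [show ((0:ℤ), (0:ℤ)) + w = w from zero_add w] at h4
end
end
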